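/- Let F₂ be the free group on two generators. Then the word problem WP(F₂ × F₂), with respect to any choice of generators, does not belong to any cone all of whose member languages are semilinear. -/

import Mathlib

/-- A subset of a commutative monoid is *linear* if it is a translate of a
finitely generated submonoid. -/
def IsLinearSet₀ {M : Type*} [AddCommMonoid M] (S : Set M) : Prop :=
  ∃ (v₀ : M) (F : Finset M),
    S = (fun v => v₀ + v) '' (AddSubmonoid.closure (F : Set M) : Set M)

/-- A subset is *semilinear* if it is a finite union of linear sets. -/
def IsSemilinearSet₀ {M : Type*} [AddCommMonoid M] (S : Set M) : Prop :=
  ∃ (n : ℕ) (f : Fin n → Set M), (∀ i, IsLinearSet₀ (f i)) ∧ S = ⋃ i, f i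

/-- The Parikh map: `parikh w a` is the number of occurrences of `a` in `w`. -/
noncomputable def parikh {α : Type*} (w : List α) : α → ℕ :=
  letI := Classical.decEq α
  fun a => w.count a

/-- A language is semilinear if its image under the Parikh map is a
semilinear subset of `ℕ^Σ`. -/
def Language.IsSemilinearLang {α : Type*} (L : Language α) : Prop :=
  IsSemilinearSet₀ (parikh '' (L : Set (List α)))

/-- A *cone* (full trio): a class of languages over finite alphabets containing
a nonempty language and closed under monoid-homomorphism images, preimages and
intersection with regular languages. -/
structure LanguageCone where
  mem : ∀ (α : Type) [Fintype α], Language α → Prop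
  exists_nonempty : ∃ (α : Type) (_ : Fintype α) (L : Language α),
      mem α L ∧ Set.Nonempty (L : Set (List α))
  image_mem : ∀ (α β : Type) [Fintype α] [Fintype β]
      (f : FreeMonoid α →* FreeMonoid β) (L : Language α),
      mem α L → mem β ((f '' (L : Set (FreeMonoid α)) : Set (FreeMonoid β)) : Language β)
  preimage_mem : ∀ (α β : Type) [Fintype α] [Fintype β]
      (f : FreeMonoid α →* FreeMonoid β) (L : Language β),
      mem β L → mem α ((f ⁻¹' (L : Set (FreeMonoid β)) : Set (FreeMonoid α)) : Language α)
  inter_regular_mem : ∀ (α : Type) [Fintype α] (L R : Language α),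
      mem α L → R.IsRegular →
      mem α (((L : Set (List α)) ∩ (R : Set (List α)) : Set (List α)) : Language α)

/-- A cone all of whose member languages are semilinear. -/
def LanguageCone.IsSemilinearCone (𝒞 : LanguageCone) : Prop :=
  ∀ (α : Type) [Fintype α] (L : Language α), 𝒞.mem α L → L.IsSemilinearLang

/-- A choice of generators for a group `G`: a surjective monoid homomorphism
from a free monoid on a finite symmetric alphabet, compatible with inversion. -/
structure GeneratorChoice (α : Type) (G : Type*) [Fintype α] [Group G] where
  π : FreeMonoid α →* G
  surjective : Function.Surjective π
  inv : α → α
  inv_involutive : Function.Involutive inv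
  inv_fixedPointFree : ∀ a, inv a ≠ a
  π_inv : ∀ a, π (FreeMonoid.of (inv a)) = (π (FreeMonoid.of a))⁻¹

/-- The word problem of `G` with respect to a choice of generators. -/
def wordProblem {α : Type} {G : Type*} [Fintype α] [Group G]
    (c : GeneratorChoice α G) : Language α :=
  {w : FreeMonoid α | c.π w = 1}

/-- The free group on two generators. -/
abbrev F2 : Type := FreeGroup (Fin 2)

namespace WPF2

-- === From p1 (assumed working) ===
abbrev LZ : Type := AddMonoidAlgebra ℤ ℤ
noncomputable def CC (r : ℤ) : LZ := AddMonoidAlgebra.single 0 r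
noncomputable def TT (k : ℤ) : LZ := AddMonoidAlgebra.single k 1
@[ext] structure HH where
  k : ℤ
  p : LZ
noncomputable instance : Mul HH := ⟨fun g h => ⟨g.k + h.k, g.p + TT g.k * h.p⟩⟩
noncomputable instance : One HH := ⟨⟨0, 0⟩⟩
noncomputable instance : Inv HH := ⟨fun g => ⟨-g.k, -(TT (-g.k) * g.p)⟩⟩
lemma hh_mul (a b : ℤ) (p q : LZ) :
    (⟨a, p⟩ * ⟨b, q⟩ : HH) = ⟨a + b, p + TT a * q⟩ := rfl
lemma TT_mul_TT (a b : ℤ) : (TT a : LZ) * TT b = TT (a + b) := by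
  show AddMonoidAlgebra.single a 1 * AddMonoidAlgebra.single b 1 = AddMonoidAlgebra.single (a + b) (1 : ℤ)
  rw [AddMonoidAlgebra.single_mul_single, one_mul]
lemma CC_zero : CC 0 = 0 := by simp [CC]
lemma CC_add (a b : ℤ) : CC a + CC b = CC (a + b) := by simp [CC]
lemma TT_zero : (TT 0 : LZ) = 1 := rfl
noncomputable instance : Group HH where
  mul_assoc a b c := by
    obtain ⟨ak, ap⟩ := a; obtain ⟨bk, bp⟩ := b; obtain ⟨ck, cp⟩ := c
    simp only [hh_mul, HH.mk.injEq]
    exact ⟨by ring, by rw [← TT_mul_TT, mul_add, add_assoc, mul_assoc]⟩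
  one_mul a := by
    obtain ⟨ak, ap⟩ := a
    show (⟨0 + ak, 0 + TT 0 * ap⟩ : HH) = ⟨ak, ap⟩
    simp [TT_zero]
  mul_one a := by
    obtain ⟨ak, ap⟩ := a
    show (⟨ak + 0, ap + TT ak * 0⟩ : HH) = ⟨ak, ap⟩
    simp
  inv_mul_cancel a := by
    obtain ⟨ak, ap⟩ := a
    show (⟨-ak + ak, -(TT (-ak) * ap) + TT (-ak) * ap⟩ : HH) = ⟨0, 0⟩
    simp
lemma hh_one : (1 : HH) = ⟨0, 0⟩ := rfl
lemma hh_pow_C (r : ℤ) (n : ℕ) : (⟨0, CC r⟩ : HH) ^ n = ⟨0, CC (n * r)⟩ := by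
  induction n with
  | zero => rw [pow_zero, hh_one, Nat.cast_zero, zero_mul, CC_zero]
  | succ n ih =>
      rw [pow_succ, ih, hh_mul, TT_zero, one_mul, CC_add]
      congr 1
      push_cast; ring
lemma hh_pow_T (a : ℤ) (n : ℕ) : (⟨a, 0⟩ : HH) ^ n = ⟨n * a, 0⟩ := by
  induction n with
  | zero => simp [hh_one]
  | succ n ih =>
      rw [pow_succ, ih, hh_mul]
      exact HH.ext (by push_cast; ring) (by simp)
lemma hh_inv_C (r : ℤ) : (⟨0, CC r⟩ : HH)⁻¹ = ⟨0, CC (-r)⟩ := by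
  show (⟨-0, -(TT (-0) * CC r)⟩ : HH) = ⟨0, CC (-r)⟩
  simp only [neg_zero, TT_zero, one_mul]
  exact HH.ext rfl (by simp [CC])
lemma hh_inv_T (a : ℤ) : (⟨a, 0⟩ : HH)⁻¹ = ⟨-a, 0⟩ := by
  show (⟨-a, -(TT (-a) * 0)⟩ : HH) = ⟨-a, 0⟩
  simp
lemma TT_cancel {P : LZ} {a : ℤ} (h : TT a * P = 0) : P = 0 := by
  have h2 : TT (-a) * (TT a * P) = 0 := by rw [h, mul_zero]
  rwa [← mul_assoc, TT_mul_TT, neg_add_cancel, TT_zero, one_mul] at h2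
lemma TTP_apply (P : LZ) : (TT 1 * P).coeff 0 = P.coeff (-1) := by
  rw [TT, AddMonoidAlgebra.coeff_single_mul_apply, one_mul]; norm_num
lemma CC_apply (r : ℤ) : (CC r).coeff 0 = r := by rw [CC, AddMonoidAlgebra.coeff_single]; exact Finsupp.single_eq_same
lemma CC_eq_zero {r : ℤ} (h : CC r = 0) : r = 0 := by
  rw [CC] at h; exact AddMonoidAlgebra.single_eq_zero.mp h
lemma CC_apply_ne {j : ℤ} (h : j ≠ 0) (r : ℤ) : (CC r).coeff j = 0 := by
  rw [CC, AddMonoidAlgebra.coeff_single, Finsupp.single_apply, if_neg (by omega)]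

-- === From p3 ===
inductive Γ : Type
  | z | y | r | x | s | l | t
deriving DecidableEq
instance : Fintype Γ := ⟨{Γ.z, Γ.y, Γ.r, Γ.x, Γ.s, Γ.l, Γ.t}, fun a => by cases a <;> decide⟩
open Γ
def rep (γ : Γ) (n : ℕ) : List Γ := List.replicate n γ
def chunk (ab : ℕ × ℕ) : List Γ := rep y ab.1 ++ Γ.r :: (rep x ab.2 ++ [Γ.s])
def body (ch : List (ℕ × ℕ)) (cc p : ℕ) : List Γ :=
  (ch.map chunk).flatten ++ (rep l cc ++ rep t p)
def word (ch : List (ℕ × ℕ)) (cc p : ℕ) : List Γ := z :: body ch cc p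

section DFApart
inductive Q : Type
  | q0 | q1 | q2 | q3 | q4 | q5 | qD
deriving DecidableEq
instance : Fintype Q := ⟨{Q.q0, Q.q1, Q.q2, Q.q3, Q.q4, Q.q5, Q.qD}, fun a => by cases a <;> decide⟩

open Γ Q

def step : Q → Γ → Q
  | q0, z => q1
  | q1, y => q2
  | q1, Γ.r => q3
  | q1, l => q4
  | q1, t => q5
  | q2, y => q2
  | q2, Γ.r => q3
  | q3, x => q3
  | q3, Γ.s => q1
  | q4, l => q4
  | q4, t => q5
  | q5, t => q5
  | _, _ => qD

def M : DFA Γ Q := ⟨step, q0, {q1, q4, q5}⟩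

def SufT (w : List Γ) : Prop := ∃ p, w = rep t p
def SufL (w : List Γ) : Prop := ∃ cc p, w = rep l cc ++ rep t p
def Suf1 (w : List Γ) : Prop := ∃ ch cc p, w = body ch cc p
def Suf3 (w : List Γ) : Prop := ∃ b w', Suf1 w' ∧ w = rep x b ++ Γ.s :: w'
def Suf2 (w : List Γ) : Prop := ∃ a w', Suf3 w' ∧ w = rep y a ++ Γ.r :: w'

def Suf : Q → List Γ → Prop
  | q0 => fun w => ∃ w', Suf1 w' ∧ w = z :: w'
  | q1 => Suf1
  | q2 => Suf2
  | q3 => Suf3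
  | q4 => SufL
  | q5 => SufT
  | qD => fun _ => False

lemma suf1_nil : Suf1 [] := ⟨[], 0, 0, rfl⟩
lemma sufL_nil : SufL [] := ⟨0, 0, rfl⟩
lemma sufT_nil : SufT [] := ⟨0, rfl⟩

lemma sufT_cons {w} (h : SufT w) : SufT (t :: w) := by
  obtain ⟨p, rfl⟩ := h; exact ⟨p + 1, rfl⟩

lemma sufL_cons_l {w} (h : SufL w) : SufL (l :: w) := by
  obtain ⟨cc, p, rfl⟩ := h; exact ⟨cc + 1, p, rfl⟩

lemma sufL_cons_t {w} (h : SufT w) : SufL (t :: w) := by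
  obtain ⟨p, rfl⟩ := h; exact ⟨0, p + 1, rfl⟩

lemma suf1_of_sufL {w} (h : SufL w) : Suf1 w := by
  obtain ⟨cc, p, rfl⟩ := h; exact ⟨[], cc, p, rfl⟩

lemma suf3_of_suf1 {w} (h : Suf1 w) : Suf3 (Γ.s :: w) := ⟨0, w, h, rfl⟩

lemma suf3_cons {w} (h : Suf3 w) : Suf3 (x :: w) := by
  obtain ⟨b, w', h1, rfl⟩ := h; exact ⟨b + 1, w', h1, rfl⟩

lemma suf2_of_suf3 {w} (h : Suf3 w) : Suf2 (Γ.r :: w) := ⟨0, w, h, rfl⟩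

lemma suf2_cons {w} (h : Suf2 w) : Suf2 (y :: w) := by
  obtain ⟨a, w', h1, rfl⟩ := h; exact ⟨a + 1, w', h1, rfl⟩

lemma suf1_of_suf2 {w} (h : Suf2 w) : Suf1 (y :: w) := by
  obtain ⟨a, w', ⟨b, w'', ⟨ch, cc, p, rfl⟩, rfl⟩, rfl⟩ := h
  refine ⟨(a + 1, b) :: ch, cc, p, ?_⟩
  simp [body, chunk, rep, List.replicate_succ, List.append_assoc]

lemma suf1_of_suf3 {w} (h : Suf3 w) : Suf1 (Γ.r :: w) := by
  obtain ⟨b, w'', ⟨ch, cc, p, rfl⟩, rfl⟩ := h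
  refine ⟨(0, b) :: ch, cc, p, ?_⟩
  simp [body, chunk, rep, List.append_assoc]

lemma suf1_of_sufT {w} (h : SufT w) : Suf1 (t :: w) := by
  obtain ⟨p, rfl⟩ := h
  exact ⟨[], 0, p + 1, rfl⟩

lemma suf1_of_sufL' {w} (h : SufL w) : Suf1 (l :: w) := by
  obtain ⟨cc, p, rfl⟩ := h
  exact ⟨[], cc + 1, p, rfl⟩

lemma sound : ∀ (w : List Γ) (q : Q), M.evalFrom q w ∈ M.accept → Suf q w := by
  intro w
  induction w with
  | nil =>
      intro q hq
      rw [DFA.evalFrom_nil] at hq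
      fin_cases q <;> simp_all [M, Suf] <;> first
        | exact suf1_nil | exact sufL_nil | exact sufT_nil
  | cons a w ih =>
      intro q hq
      have hq' : M.evalFrom (step q a) w ∈ M.accept := hq
      have := ih (step q a) hq'
      cases q <;> cases a <;> simp_all only [step, Suf] <;> first
        | exact ⟨w, this, rfl⟩
        | exact suf1_of_suf2 this
        | exact suf1_of_suf3 this
        | exact suf1_of_sufL' this
        | exact suf1_of_sufT this
        | exact suf2_cons this
        | exact suf2_of_suf3 this
        | exact suf3_cons this
        | exact suf3_of_suf1 this
        | exact sufL_cons_l this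
        | exact sufL_cons_t this
        | exact sufT_cons this

lemma accepts_sound {w : List Γ} (h : w ∈ M.accepts) :
    ∃ ch cc p, w = word ch cc p := by
  have h0 : M.evalFrom M.start w ∈ M.accept := h
  have := sound w M.start h0
  obtain ⟨w', h1, rfl⟩ := this
  obtain ⟨ch, cc, p, rfl⟩ := h1
  exact ⟨ch, cc, p, rfl⟩

lemma evalFrom_rep_loop (q : Q) (γ : Γ) (h : step q γ = q) (n : ℕ) :
    M.evalFrom q (List.replicate n γ) = q := by
  induction n with
  | zero => rfl
  | succ n ih =>
      rw [List.replicate_succ]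
      show M.evalFrom (step q γ) (List.replicate n γ) = q
      rw [h]; exact ih

lemma evalFrom_chunk (ab : ℕ × ℕ) : M.evalFrom q1 (chunk ab) = q1 := by
  obtain ⟨a, b⟩ := ab
  have h3 : M.evalFrom q3 (rep x b ++ [Γ.s]) = q1 := by
    rw [DFA.evalFrom_of_append, rep, evalFrom_rep_loop q3 x rfl]; rfl
  have h3' : ∀ q', M.evalFrom q' (rep x b) = q' → step q' Γ.r = q3 →
      M.evalFrom q' (Γ.r :: (rep x b ++ [Γ.s])) = q1 := by
    intro q' _ _
    show M.evalFrom (step q' Γ.r) (rep x b ++ [Γ.s]) = q1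
    simp_all
  cases a with
  | zero =>
      show M.evalFrom q1 (Γ.r :: (rep x b ++ [Γ.s])) = q1
      show M.evalFrom q3 (rep x b ++ [Γ.s]) = q1
      exact h3
  | succ a =>
      show M.evalFrom q1 (rep y (a+1) ++ Γ.r :: (rep x b ++ [Γ.s])) = q1
      rw [rep, List.replicate_succ]
      show M.evalFrom q2 (List.replicate a y ++ Γ.r :: (rep x b ++ [Γ.s])) = q1
      rw [DFA.evalFrom_of_append, evalFrom_rep_loop q2 y rfl]
      show M.evalFrom q3 (rep x b ++ [Γ.s]) = q1
      exact h3

lemma evalFrom_chunks (chs : List (ℕ × ℕ)) :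
    M.evalFrom q1 (chs.map chunk).flatten = q1 := by
  induction chs with
  | nil => rfl
  | cons c chs ih =>
      rw [List.map_cons, List.flatten_cons, DFA.evalFrom_of_append, evalFrom_chunk]
      exact ih

lemma word_accepted (ch : List (ℕ × ℕ)) (cc p : ℕ) : word ch cc p ∈ M.accepts := by
  show M.evalFrom M.start (word ch cc p) ∈ M.accept
  have : M.evalFrom M.start (word ch cc p)
      = M.evalFrom q1 (body ch cc p) := rfl
  rw [this, body, DFA.evalFrom_of_append, evalFrom_chunks, DFA.evalFrom_of_append]
  have hrt : ∀ q', step q' t = q5 → M.evalFrom q' (rep t p) ∈ M.accept → True := fun _ _ _ => trivial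
  clear hrt
  have htail : ∀ q', q' = q4 ∨ q' = q5 ∨ q' = q1 → M.evalFrom q' (rep t p) ∈ M.accept := by
    intro q' hq'
    cases p with
    | zero =>
        rcases hq' with rfl | rfl | rfl
        · exact Or.inr (Or.inl rfl)
        · exact Or.inr (Or.inr rfl)
        · exact Or.inl rfl
    | succ p =>
        have : M.evalFrom q5 (List.replicate p t) = q5 := evalFrom_rep_loop q5 t rfl p
        rw [rep, List.replicate_succ]
        rcases hq' with rfl | rfl | rfl <;>
          · show M.evalFrom q5 (List.replicate p t) ∈ M.accept
            rw [this]; exact Or.inr (Or.inr rfl)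
  cases cc with
  | zero => exact htail q1 (Or.inr (Or.inr rfl))
  | succ cc =>
      rw [rep, List.replicate_succ]
      show M.evalFrom (M.evalFrom q4 (List.replicate cc l)) (rep t p) ∈ M.accept
      rw [evalFrom_rep_loop q4 l rfl]
      exact htail q4 (Or.inl rfl)

end DFApart

-- === New: group homomorphism analysis ===
abbrev F2' : Type := FreeGroup (Fin 2)
noncomputable def AA : F2' := FreeGroup.of 0
noncomputable def BB : F2' := FreeGroup.of 1

noncomputable def val : Γ → F2' × F2'
  | z => (AA * AA, 1)
  | y => (AA⁻¹, AA * AA)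
  | Γ.r => (BB, 1)
  | x => (AA * AA, AA⁻¹)
  | Γ.s => (1, BB)
  | l => (AA⁻¹, 1)
  | t => (BB⁻¹, BB⁻¹)

noncomputable def φ : F2' →* HH := FreeGroup.lift ![⟨0, CC 1⟩, ⟨1, 0⟩]

lemma φ_A : φ AA = ⟨0, CC 1⟩ := by
  rw [AA, φ, FreeGroup.lift_apply_of]; rfl
lemma φ_B : φ BB = ⟨1, 0⟩ := by
  rw [BB, φ, FreeGroup.lift_apply_of]; rfl

section HomHelpers
variable {N : Type*} [Monoid N] (m : FreeMonoid Γ →* N)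
lemma hom_app (u v : List Γ) :
    m (FreeMonoid.ofList (u ++ v)) = m (FreeMonoid.ofList u) * m (FreeMonoid.ofList v) := by
  rw [FreeMonoid.ofList_append, map_mul]
lemma hom_cons (γ : Γ) (u : List Γ) :
    m (FreeMonoid.ofList (γ :: u)) = m (FreeMonoid.of γ) * m (FreeMonoid.ofList u) := by
  rw [FreeMonoid.ofList_cons, map_mul]
lemma hom_nil : m (FreeMonoid.ofList []) = 1 := by
  rw [FreeMonoid.ofList_nil, map_one]
lemma hom_rep (γ : Γ) (n : ℕ) :
    m (FreeMonoid.ofList (List.replicate n γ)) = m (FreeMonoid.of γ) ^ n := by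
  induction n with
  | zero => rw [List.replicate_zero, hom_nil, pow_zero]
  | succ n ih => rw [List.replicate_succ, hom_cons, ih, pow_succ']
lemma hom_rep' (γ : Γ) (n : ℕ) :
    m (FreeMonoid.ofList (rep γ n)) = m (FreeMonoid.of γ) ^ n := hom_rep m γ n
lemma hom_triv (u : List Γ) (h : ∀ γ ∈ u, m (FreeMonoid.of γ) = 1) :
    m (FreeMonoid.ofList u) = 1 := by
  induction u with
  | nil => exact hom_nil m
  | cons a u ih =>
      rw [hom_cons, h a List.mem_cons_self, one_mul]
      exact ih fun γ hγ => h γ (List.mem_cons_of_mem a hγ)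
end HomHelpers

section Mu
variable (μ : FreeMonoid Γ →* F2' × F2') (hval : ∀ γ, μ (FreeMonoid.of γ) = val γ)

noncomputable def ν₁ : FreeMonoid Γ →* HH :=
  φ.comp ((MonoidHom.fst F2' F2').comp μ)
noncomputable def ν₂ : FreeMonoid Γ →* HH :=
  φ.comp ((MonoidHom.snd F2' F2').comp μ)

include hval in
lemma ν₁_of (γ : Γ) : ν₁ μ (FreeMonoid.of γ) = φ (val γ).1 := by
  simp [ν₁, hval γ]
include hval in
lemma ν₂_of (γ : Γ) : ν₂ μ (FreeMonoid.of γ) = φ (val γ).2 := by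
  simp [ν₂, hval γ]

include hval
-- letter values
lemma ν₁_z : ν₁ μ (FreeMonoid.of z) = ⟨0, CC 2⟩ := by
  rw [ν₁_of μ hval, val, map_mul, φ_A, hh_mul, TT_zero, one_mul, CC_add]; norm_num
lemma ν₁_y : ν₁ μ (FreeMonoid.of y) = ⟨0, CC (-1)⟩ := by
  rw [ν₁_of μ hval, val, map_inv, φ_A, hh_inv_C]
lemma ν₁_r : ν₁ μ (FreeMonoid.of Γ.r) = ⟨1, 0⟩ := by
  rw [ν₁_of μ hval, val, φ_B]
lemma ν₁_x : ν₁ μ (FreeMonoid.of x) = ⟨0, CC 2⟩ := by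
  rw [ν₁_of μ hval, val, map_mul, φ_A, hh_mul, TT_zero, one_mul, CC_add]; norm_num
lemma ν₁_s : ν₁ μ (FreeMonoid.of Γ.s) = 1 := by
  rw [ν₁_of μ hval, val, map_one]
lemma ν₁_l : ν₁ μ (FreeMonoid.of l) = ⟨0, CC (-1)⟩ := by
  rw [ν₁_of μ hval, val, map_inv, φ_A, hh_inv_C]
lemma ν₁_t : ν₁ μ (FreeMonoid.of t) = ⟨-1, 0⟩ := by
  rw [ν₁_of μ hval, val, map_inv, φ_B, hh_inv_T]
lemma ν₂_z : ν₂ μ (FreeMonoid.of z) = 1 := by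
  rw [ν₂_of μ hval, val, map_one]
lemma ν₂_y : ν₂ μ (FreeMonoid.of y) = ⟨0, CC 2⟩ := by
  rw [ν₂_of μ hval, val, map_mul, φ_A, hh_mul, TT_zero, one_mul, CC_add]; norm_num
lemma ν₂_r : ν₂ μ (FreeMonoid.of Γ.r) = 1 := by
  rw [ν₂_of μ hval, val, map_one]
lemma ν₂_x : ν₂ μ (FreeMonoid.of x) = ⟨0, CC (-1)⟩ := by
  rw [ν₂_of μ hval, val, map_inv, φ_A, hh_inv_C]
lemma ν₂_s : ν₂ μ (FreeMonoid.of Γ.s) = ⟨1, 0⟩ := by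
  rw [ν₂_of μ hval, val, φ_B]
lemma ν₂_l : ν₂ μ (FreeMonoid.of l) = 1 := by
  rw [ν₂_of μ hval, val, map_one]
lemma ν₂_t : ν₂ μ (FreeMonoid.of t) = ⟨-1, 0⟩ := by
  rw [ν₂_of μ hval, val, map_inv, φ_B, hh_inv_T]
end Mu

-- nonnegative support
def NNh (h : HH) : Prop := 0 ≤ h.k ∧ ∀ j : ℤ, j < 0 → h.p.coeff j = 0

lemma NNh_one : NNh 1 := ⟨le_refl 0, fun _ _ => rfl⟩

lemma NNh_mul {g h : HH} (hg : NNh g) (hh : NNh h) : NNh (g * h) := by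
  obtain ⟨gk, gp⟩ := g; obtain ⟨hk, hp⟩ := h
  refine ⟨add_nonneg hg.1 hh.1, fun j hj => ?_⟩
  have hg1 : (0:ℤ) ≤ gk := hg.1
  have hgp : gp.coeff j = 0 := hg.2 j hj
  have hhp : hp.coeff (-gk + j) = 0 := hh.2 _ (by omega)
  show (gp + TT gk * hp).coeff j = 0
  rw [AddMonoidAlgebra.coeff_add, Finsupp.add_apply, hgp, TT, AddMonoidAlgebra.coeff_single_mul_apply, one_mul, hhp, add_zero]

lemma NNh_list {mh : FreeMonoid Γ →* HH} (u : List Γ)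
    (h : ∀ γ ∈ u, NNh (mh (FreeMonoid.of γ))) : NNh (mh (FreeMonoid.ofList u)) := by
  induction u with
  | nil => rw [hom_nil]; exact NNh_one
  | cons a u ih =>
      rw [hom_cons]
      exact NNh_mul (h a List.mem_cons_self)
        (ih fun γ hγ => h γ (List.mem_cons_of_mem a hγ))

lemma mem_chunks {γ : Γ} {ch : List (ℕ × ℕ)}
    (h : γ ∈ (ch.map chunk).flatten) : γ = y ∨ γ = Γ.r ∨ γ = x ∨ γ = Γ.s := by
  rw [List.mem_flatten] at h
  obtain ⟨lsub, hl, hγ⟩ := h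
  rw [List.mem_map] at hl
  obtain ⟨ab, _, rfl⟩ := hl
  simp only [chunk, rep, List.mem_append, List.mem_cons, List.mem_replicate,
    List.mem_singleton] at hγ
  tauto

lemma NNh_main₁ (μ : FreeMonoid Γ →* F2' × F2') (hval : ∀ γ, μ (FreeMonoid.of γ) = val γ)
    (ch : List (ℕ × ℕ)) (cc : ℕ) :
    NNh (ν₁ μ (FreeMonoid.ofList ((ch.map chunk).flatten ++ rep l cc))) := by
  apply NNh_list
  intro γ hγ
  rw [List.mem_append] at hγ
  have hmem : γ = y ∨ γ = Γ.r ∨ γ = x ∨ γ = Γ.s ∨ γ = l := by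
    rcases hγ with h | h
    · have := mem_chunks h; tauto
    · rw [rep, List.mem_replicate] at h; tauto
  rcases hmem with rfl | rfl | rfl | rfl | rfl
  · rw [ν₁_y μ hval]; exact ⟨le_refl 0, fun j hj => by rw [CC, AddMonoidAlgebra.coeff_single, Finsupp.single_apply]; simp; omega⟩
  · rw [ν₁_r μ hval]; exact ⟨by norm_num, fun j hj => rfl⟩
  · rw [ν₁_x μ hval]; exact ⟨le_refl 0, fun j hj => by rw [CC, AddMonoidAlgebra.coeff_single, Finsupp.single_apply]; simp; omega⟩
  · rw [ν₁_s μ hval]; exact NNh_one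
  · rw [ν₁_l μ hval]; exact ⟨le_refl 0, fun j hj => by rw [CC, AddMonoidAlgebra.coeff_single, Finsupp.single_apply]; simp; omega⟩

lemma NNh_main₂ (μ : FreeMonoid Γ →* F2' × F2') (hval : ∀ γ, μ (FreeMonoid.of γ) = val γ)
    (ch : List (ℕ × ℕ)) (cc : ℕ) :
    NNh (ν₂ μ (FreeMonoid.ofList ((ch.map chunk).flatten ++ rep l cc))) := by
  apply NNh_list
  intro γ hγ
  rw [List.mem_append] at hγ
  have hmem : γ = y ∨ γ = Γ.r ∨ γ = x ∨ γ = Γ.s ∨ γ = l := by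
    rcases hγ with h | h
    · have := mem_chunks h; tauto
    · rw [rep, List.mem_replicate] at h; tauto
  rcases hmem with rfl | rfl | rfl | rfl | rfl
  · rw [ν₂_y μ hval]; exact ⟨le_refl 0, fun j hj => by rw [CC, AddMonoidAlgebra.coeff_single, Finsupp.single_apply]; simp; omega⟩
  · rw [ν₂_r μ hval]; exact NNh_one
  · rw [ν₂_x μ hval]; exact ⟨le_refl 0, fun j hj => by rw [CC, AddMonoidAlgebra.coeff_single, Finsupp.single_apply]; simp; omega⟩
  · rw [ν₂_s μ hval]; exact ⟨by norm_num, fun j hj => rfl⟩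
  · rw [ν₂_l μ hval]; exact NNh_one

lemma body_nil (cc p : ℕ) : body [] cc p = rep l cc ++ rep t p := by
  simp [body]

lemma body_cons (a b : ℕ) (ch : List (ℕ × ℕ)) (cc p : ℕ) :
    body ((a, b) :: ch) cc p = chunk (a, b) ++ body ch cc p := by
  simp [body, List.append_assoc]

section Mu2
variable (μ : FreeMonoid Γ →* F2' × F2') (hval : ∀ γ, μ (FreeMonoid.of γ) = val γ)
include hval

lemma ν₁_chunk (a b : ℕ) :
    ν₁ μ (FreeMonoid.ofList (chunk (a, b))) = ⟨1, CC (-(a : ℤ)) + TT 1 * CC (2 * b)⟩ := by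
  show ν₁ μ (FreeMonoid.ofList (rep y a ++ Γ.r :: (rep x b ++ [Γ.s]))) = _
  rw [hom_app, hom_cons, hom_app, hom_cons, hom_nil, rep, rep, hom_rep, hom_rep,
    ν₁_y μ hval, ν₁_r μ hval, ν₁_x μ hval, ν₁_s μ hval, hh_pow_C, hh_pow_C,
    mul_one, mul_one, hh_mul, hh_mul]
  refine HH.ext (by norm_num) ?_
  show CC ((a : ℤ) * -1) + TT 0 * (0 + TT 1 * CC ((b : ℤ) * 2)) = _
  rw [TT_zero, one_mul, zero_add, show ((a:ℤ) * -1) = -(a:ℤ) from by ring,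
    show ((b:ℤ) * 2) = 2 * (b:ℤ) from by ring]

lemma ν₂_chunk (a b : ℕ) :
    ν₂ μ (FreeMonoid.ofList (chunk (a, b))) = ⟨1, CC (2 * a - b)⟩ := by
  show ν₂ μ (FreeMonoid.ofList (rep y a ++ Γ.r :: (rep x b ++ [Γ.s]))) = _
  rw [hom_app, hom_cons, hom_app, hom_cons, hom_nil, rep, rep, hom_rep, hom_rep,
    ν₂_y μ hval, ν₂_r μ hval, ν₂_x μ hval, ν₂_s μ hval, hh_pow_C, hh_pow_C,
    one_mul, mul_one, hh_mul, hh_mul]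
  refine HH.ext (by norm_num) ?_
  show CC ((a : ℤ) * 2) + TT 0 * (CC ((b : ℤ) * -1) + TT 0 * 0) = _
  rw [TT_zero, one_mul, mul_zero, add_zero, CC_add]
  congr 1
  ring

lemma ν₁_body_eq (ch : List (ℕ × ℕ)) (cc p : ℕ) :
    ν₁ μ (FreeMonoid.ofList (body ch cc p)) =
      ⟨(ν₁ μ (FreeMonoid.ofList ((ch.map chunk).flatten ++ rep l cc))).k - p,
       (ν₁ μ (FreeMonoid.ofList ((ch.map chunk).flatten ++ rep l cc))).p⟩ := by
  have : body ch cc p = ((ch.map chunk).flatten ++ rep l cc) ++ rep t p := by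
    simp [body, List.append_assoc]
  rw [this, hom_app, hom_rep', ν₁_t μ hval, hh_pow_T]
  rcases hX : ν₁ μ (FreeMonoid.ofList ((ch.map chunk).flatten ++ rep l cc)) with ⟨xm, xp⟩
  rw [hh_mul]
  exact HH.ext (by push_cast; ring) (by simp)

lemma ν₂_body_eq (ch : List (ℕ × ℕ)) (cc p : ℕ) :
    ν₂ μ (FreeMonoid.ofList (body ch cc p)) =
      ⟨(ν₂ μ (FreeMonoid.ofList ((ch.map chunk).flatten ++ rep l cc))).k - p,
       (ν₂ μ (FreeMonoid.ofList ((ch.map chunk).flatten ++ rep l cc))).p⟩ := by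
  have : body ch cc p = ((ch.map chunk).flatten ++ rep l cc) ++ rep t p := by
    simp [body, List.append_assoc]
  rw [this, hom_app, hom_rep', ν₂_t μ hval, hh_pow_T]
  rcases hX : ν₂ μ (FreeMonoid.ofList ((ch.map chunk).flatten ++ rep l cc)) with ⟨xm, xp⟩
  rw [hh_mul]
  exact HH.ext (by push_cast; ring) (by simp)

lemma NN_bodyp₁ (ch : List (ℕ × ℕ)) (cc p : ℕ) :
    ∀ j : ℤ, j < 0 → (ν₁ μ (FreeMonoid.ofList (body ch cc p))).p.coeff j = 0 := by
  intro j hj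
  rw [ν₁_body_eq μ hval]
  exact (NNh_main₁ μ hval ch cc).2 j hj

lemma NN_bodyp₂ (ch : List (ℕ × ℕ)) (cc p : ℕ) :
    ∀ j : ℤ, j < 0 → (ν₂ μ (FreeMonoid.ofList (body ch cc p))).p.coeff j = 0 := by
  intro j hj
  rw [ν₂_body_eq μ hval]
  exact (NNh_main₂ μ hval ch cc).2 j hj

lemma ML : ∀ (ch : List (ℕ × ℕ)) (e cc p : ℕ),
    ((⟨0, CC (2 * e)⟩ : HH) * ν₁ μ (FreeMonoid.ofList (body ch cc p))).p = 0 →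
    (ν₂ μ (FreeMonoid.ofList (body ch cc p))).p = 0 →
    cc = 2 * e * 4 ^ ch.length := by
  intro ch
  induction ch with
  | nil =>
      intro e cc p h1 _
      rw [body_nil, hom_app, hom_rep', hom_rep', ν₁_l μ hval, ν₁_t μ hval,
        hh_pow_C, hh_pow_T, hh_mul, hh_mul] at h1
      have h1' : CC (2 * (e:ℤ)) + TT 0 * (CC ((cc:ℤ) * -1) + TT 0 * 0) = 0 := h1
      rw [TT_zero, one_mul, mul_zero, add_zero, CC_add] at h1'
      have := CC_eq_zero h1'
      simp only [List.length_nil, pow_zero, mul_one]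
      omega
  | cons ab ch ih =>
      obtain ⟨a, b⟩ := ab
      intro e cc p h1 h2
      rw [body_cons, hom_app, ν₁_chunk μ hval] at h1
      rw [body_cons, hom_app, ν₂_chunk μ hval] at h2
      rcases hX : ν₁ μ (FreeMonoid.ofList (body ch cc p)) with ⟨xm, xp⟩
      rcases hY : ν₂ μ (FreeMonoid.ofList (body ch cc p)) with ⟨ym, yp⟩
      rw [hX, hh_mul, hh_mul] at h1
      rw [hY, hh_mul] at h2
      have hxp : xp.coeff (-1) = 0 := by
        have := NN_bodyp₁ μ hval ch cc p (-1) (by norm_num)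
        rwa [hX] at this
      have hyp : yp.coeff (-1) = 0 := by
        have := NN_bodyp₂ μ hval ch cc p (-1) (by norm_num)
        rwa [hY] at this
      -- extract from h1
      have h1' : CC (2 * (e:ℤ)) + TT 0 * ((CC (-(a:ℤ)) + TT 1 * CC (2 * b)) + TT 1 * xp) = 0 := h1
      rw [TT_zero, one_mul] at h1'
      have h10 : (CC (2 * (e:ℤ)) + ((CC (-(a:ℤ)) + TT 1 * CC (2 * b)) + TT 1 * xp)).coeff 0 = 0 := by
        rw [h1']; rfl
      rw [AddMonoidAlgebra.coeff_add, AddMonoidAlgebra.coeff_add, AddMonoidAlgebra.coeff_add,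
        Finsupp.add_apply, Finsupp.add_apply, Finsupp.add_apply, CC_apply, CC_apply,
        TTP_apply, TTP_apply, hxp, CC_apply_ne (by norm_num)] at h10
      have ha : a = 2 * e := by omega
      have hc : CC (2 * (e:ℤ)) + CC (-(a:ℤ)) = 0 := by
        rw [CC_add, show (2 * (e:ℤ) + -(a:ℤ)) = 0 from by omega, CC_zero]
      have hTT : TT 1 * (CC (2 * (b:ℤ)) + xp) = 0 := by
        rw [mul_add]
        linear_combination h1' - hc
      have hsum : CC (2 * (b:ℤ)) + xp = 0 := TT_cancel hTT
      -- extract from h2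
      have h2' : CC (2 * (a:ℤ) - b) + TT 1 * yp = 0 := h2
      have h20 : (CC (2 * (a:ℤ) - b) + TT 1 * yp).coeff 0 = 0 := by rw [h2']; rfl
      rw [AddMonoidAlgebra.coeff_add, Finsupp.add_apply, CC_apply, TTP_apply, hyp] at h20
      have hb : b = 2 * a := by omega
      have hyp0 : yp = 0 := by
        apply TT_cancel (a := 1)
        have hc2 : CC (2 * (a:ℤ) - b) = 0 := by
          rw [show (2 * (a:ℤ) - b) = 0 from by omega, CC_zero]
        linear_combination h2' - hc2
      -- apply IH
      have hih := ih b cc p (by rw [hX, hh_mul, TT_zero, one_mul]; exact hsum)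
        (by rw [hY]; exact hyp0)
      rw [hih, List.length_cons, pow_succ, hb, ha]
      ring

end Mu2

def chW (k : ℕ) : List (ℕ × ℕ) := (List.range k).map fun j => (2 * 4 ^ j, 4 * 4 ^ j)

def wit (k : ℕ) : List Γ := word (chW k) (2 * 4 ^ k) k

section Mu3
variable (μ : FreeMonoid Γ →* F2' × F2') (hval : ∀ γ, μ (FreeMonoid.of γ) = val γ)

noncomputable def m1 : FreeMonoid Γ →* F2' := (MonoidHom.fst F2' F2').comp μ
noncomputable def m2 : FreeMonoid Γ →* F2' := (MonoidHom.snd F2' F2').comp μ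

include hval

lemma m1_of (γ : Γ) : m1 μ (FreeMonoid.of γ) = (val γ).1 := by simp [m1, hval γ]
lemma m2_of (γ : Γ) : m2 μ (FreeMonoid.of γ) = (val γ).2 := by simp [m2, hval γ]

lemma m1_chunk (a b : ℕ) :
    m1 μ (FreeMonoid.ofList (chunk (a, b))) = (AA ^ a)⁻¹ * (BB * AA ^ (2 * b)) := by
  show m1 μ (FreeMonoid.ofList (rep y a ++ Γ.r :: (rep x b ++ [Γ.s]))) = _
  rw [hom_app, hom_cons, hom_app, hom_cons, hom_nil, hom_rep', hom_rep',
    m1_of μ hval, m1_of μ hval, m1_of μ hval, m1_of μ hval]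
  show (AA⁻¹) ^ a * (BB * ((AA * AA) ^ b * (1 * 1))) = _
  rw [mul_one, mul_one, inv_pow, ← pow_two, ← pow_mul]

lemma m2_chunk (a b : ℕ) :
    m2 μ (FreeMonoid.ofList (chunk (a, b))) = AA ^ (2 * a) * ((AA ^ b)⁻¹ * BB) := by
  show m2 μ (FreeMonoid.ofList (rep y a ++ Γ.r :: (rep x b ++ [Γ.s]))) = _
  rw [hom_app, hom_cons, hom_app, hom_cons, hom_nil, hom_rep', hom_rep',
    m2_of μ hval, m2_of μ hval, m2_of μ hval, m2_of μ hval]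
  show (AA * AA) ^ a * (1 * ((AA⁻¹) ^ b * (BB * 1))) = _
  rw [mul_one, one_mul, inv_pow, ← pow_two, ← pow_mul]

lemma wit_core (k : ℕ) :
    m1 μ (FreeMonoid.ofList (z :: ((chW k).map chunk).flatten))
      = BB ^ k * AA ^ (2 * 4 ^ k) ∧
    m2 μ (FreeMonoid.ofList (z :: ((chW k).map chunk).flatten)) = BB ^ k := by
  induction k with
  | zero =>
      constructor
      · rw [chW]
        show m1 μ (FreeMonoid.ofList [z]) = _
        rw [hom_cons, hom_nil, mul_one, m1_of μ hval]
        show AA * AA = BB ^ 0 * AA ^ (2 * 4 ^ 0)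
        rw [pow_zero, one_mul]
        norm_num [pow_two]
      · rw [chW]
        show m2 μ (FreeMonoid.ofList [z]) = _
        rw [hom_cons, hom_nil, mul_one, m2_of μ hval]
        show (1 : F2') = BB ^ 0
        rw [pow_zero]
  | succ k ih =>
      have hsplit : (z :: ((chW (k+1)).map chunk).flatten)
          = (z :: ((chW k).map chunk).flatten) ++ chunk (2 * 4 ^ k, 4 * 4 ^ k) := by
        rw [chW, List.range_succ, List.map_append, List.map_append, List.flatten_append]
        simp [chW]
      rw [hsplit, hom_app, hom_app, ih.1, ih.2, m1_chunk μ hval, m2_chunk μ hval]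
      constructor
      · have h4 : 2 * (4 * 4 ^ k) = 2 * 4 ^ (k + 1) := by ring
        rw [h4]
        calc BB ^ k * AA ^ (2 * 4 ^ k) * ((AA ^ (2 * 4 ^ k))⁻¹ * (BB * AA ^ (2 * 4 ^ (k+1))))
            = BB ^ k * (AA ^ (2 * 4 ^ k) * (AA ^ (2 * 4 ^ k))⁻¹) * (BB * AA ^ (2 * 4 ^ (k+1))) := by
              group
          _ = BB ^ k * BB * AA ^ (2 * 4 ^ (k+1)) := by rw [mul_inv_cancel, mul_one, mul_assoc]
          _ = BB ^ (k + 1) * AA ^ (2 * 4 ^ (k+1)) := by rw [pow_succ BB k]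
      · have hab : 2 * (2 * 4 ^ k) = 4 * 4 ^ k := by ring
        rw [hab]
        calc BB ^ k * (AA ^ (4 * 4 ^ k) * ((AA ^ (4 * 4 ^ k))⁻¹ * BB))
            = BB ^ k * (AA ^ (4 * 4 ^ k) * (AA ^ (4 * 4 ^ k))⁻¹ * BB) := by group
          _ = BB ^ k * BB := by rw [mul_inv_cancel, one_mul]
          _ = BB ^ (k + 1) := by rw [pow_succ BB k]

lemma wit_eq_one (k : ℕ) : μ (FreeMonoid.ofList (wit k)) = 1 := by
  have hsplit : wit k
      = (z :: ((chW k).map chunk).flatten) ++ (rep l (2 * 4 ^ k) ++ rep t k) := by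
    rw [wit, word, body]
    rfl
  have hm1 : m1 μ (FreeMonoid.ofList (wit k)) = 1 := by
    rw [hsplit, hom_app, hom_app, hom_rep', hom_rep', (wit_core μ hval k).1,
      m1_of μ hval, m1_of μ hval]
    show BB ^ k * AA ^ (2 * 4 ^ k) * ((AA⁻¹) ^ (2 * 4 ^ k) * (BB⁻¹) ^ k) = 1
    rw [inv_pow, inv_pow]
    group
  have hm2 : m2 μ (FreeMonoid.ofList (wit k)) = 1 := by
    rw [hsplit, hom_app, hom_app, hom_rep', hom_rep', (wit_core μ hval k).2,
      m2_of μ hval, m2_of μ hval]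
    show BB ^ k * ((1 : F2') ^ (2 * 4 ^ k) * (BB⁻¹) ^ k) = 1
    rw [one_pow, one_mul, inv_pow]
    group
  have : μ (FreeMonoid.ofList (wit k)) =
      (m1 μ (FreeMonoid.ofList (wit k)), m2 μ (FreeMonoid.ofList (wit k))) := rfl
  rw [this, hm1, hm2]
  rfl

end Mu3

noncomputable def hm : FreeMonoid Γ →* FreeMonoid (Fin 1) :=
  FreeMonoid.lift fun γ => if γ = l then FreeMonoid.of 0 else 1

lemma of_pow (n : ℕ) :
    (FreeMonoid.of (0 : Fin 1)) ^ n = FreeMonoid.ofList (List.replicate n 0) := by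
  induction n with
  | zero => rw [pow_zero, List.replicate_zero, FreeMonoid.ofList_nil]
  | succ n ih => rw [pow_succ', ih, List.replicate_succ, FreeMonoid.ofList_cons]

lemma hm_word (ch : List (ℕ × ℕ)) (cc p : ℕ) :
    hm (FreeMonoid.ofList (word ch cc p)) = FreeMonoid.ofList (List.replicate cc (0 : Fin 1)) := by
  rw [word, body, hom_cons, hom_app, hom_app, hom_rep', hom_rep']
  have hz : hm (FreeMonoid.of z) = 1 := by rw [hm, FreeMonoid.lift_eval_of]; rfl
  have hl : hm (FreeMonoid.of l) = FreeMonoid.of 0 := by rw [hm, FreeMonoid.lift_eval_of]; rfl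
  have ht : hm (FreeMonoid.of t) = 1 := by rw [hm, FreeMonoid.lift_eval_of]; rfl
  have hfl : hm (FreeMonoid.ofList ((ch.map chunk).flatten)) = 1 := by
    apply hom_triv
    intro γ hγ
    rcases mem_chunks hγ with rfl | rfl | rfl | rfl <;> rw [hm, FreeMonoid.lift_eval_of] <;> rfl
  rw [hz, hl, ht, hfl, one_mul, one_mul, one_pow, mul_one, of_pow]

lemma parikh_rep (cc : ℕ) :
    parikh (List.replicate cc (0 : Fin 1)) = fun _ => cc := by
  funext i
  have hi : i = 0 := Subsingleton.elim i 0
  subst hi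
  simp [parikh]

lemma parikh_rep' (cc : ℕ) :
    parikh (FreeMonoid.ofList (List.replicate cc (0 : Fin 1))) = fun _ => cc :=
  parikh_rep cc

lemma not_semilinear (S : Set (Fin 1 → ℕ))
    (hub : ∀ v ∈ S, ∃ k : ℕ, v 0 = 2 * 4 ^ k)
    (hall : ∀ k : ℕ, (fun _ => 2 * 4 ^ k : Fin 1 → ℕ) ∈ S) :
    ¬ IsSemilinearSet₀ S := by
  rintro ⟨n, f, hlin, hU⟩
  have hex : ∀ k : ℕ, ∃ i : Fin n, (fun _ => 2 * 4 ^ k : Fin 1 → ℕ) ∈ f i := by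
    intro k
    have h := hall k
    rw [hU] at h
    exact Set.mem_iUnion.mp h
  choose idx hidx using hex
  have hcard : (Finset.univ : Finset (Fin n)).card < (Finset.range (n + 1)).card := by simp
  obtain ⟨k₁, hk₁, k₂, hk₂, hne, heq⟩ :=
    Finset.exists_ne_map_eq_of_card_lt_of_maps_to hcard
      (fun a _ => Finset.mem_univ (idx a))
  obtain ⟨v₀, F, hF⟩ := hlin (idx k₁)
  have hp1 : (fun _ => 2 * 4 ^ k₁ : Fin 1 → ℕ) ∈ f (idx k₁) := hidx k₁
  have hp2 : (fun _ => 2 * 4 ^ k₂ : Fin 1 → ℕ) ∈ f (idx k₁) := heq ▸ hidx k₂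
  rw [hF] at hp1 hp2
  obtain ⟨w₁, hw₁, he₁⟩ := hp1
  obtain ⟨w₂, hw₂, he₂⟩ := hp2
  have hwne : w₁ ≠ w₂ := by
    intro hcon
    apply hne
    have hfe : (fun _ => 2 * 4 ^ k₁ : Fin 1 → ℕ) = (fun _ => 2 * 4 ^ k₂ : Fin 1 → ℕ) := by
      rw [← he₁, ← he₂, hcon]
    have h2 : 2 * 4 ^ k₁ = 2 * 4 ^ k₂ := congrFun hfe 0
    exact Nat.pow_right_injective (by norm_num : 2 ≤ 4) (show (4:ℕ) ^ k₁ = 4 ^ k₂ by omega)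
  have hnz : ∃ m ∈ AddSubmonoid.closure (F : Set (Fin 1 → ℕ)), m ≠ 0 := by
    rcases eq_or_ne w₁ 0 with h | h
    · exact ⟨w₂, hw₂, fun hc => hwne (h.trans hc.symm)⟩
    · exact ⟨w₁, hw₁, h⟩
  obtain ⟨m, hm, hm0⟩ := hnz
  have hS : ∀ u ∈ AddSubmonoid.closure (F : Set (Fin 1 → ℕ)), v₀ + u ∈ S := by
    intro u hu
    have : v₀ + u ∈ f (idx k₁) := by rw [hF]; exact ⟨u, hu, rfl⟩
    rw [hU]
    exact Set.mem_iUnion.mpr ⟨idx k₁, this⟩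
  obtain ⟨k0, h0⟩ := hub _ (hS 0 (AddSubmonoid.zero_mem _))
  obtain ⟨ka, hA⟩ := hub _ (hS m hm)
  obtain ⟨kb, hB⟩ := hub _ (hS (m + m) (AddSubmonoid.add_mem _ hm hm))
  have hd : m 0 ≠ 0 := by
    intro hcon
    exact hm0 (funext fun j => by rw [Subsingleton.elim j (0 : Fin 1)]; exact hcon)
  rw [Pi.add_apply, Pi.zero_apply, add_zero] at h0
  rw [Pi.add_apply] at hA
  rw [Pi.add_apply, Pi.add_apply] at hB
  have hlt : (4:ℕ) ^ ka < 4 ^ kb := by omega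
  have hk : ka < kb := (Nat.pow_lt_pow_iff_right (by norm_num)).mp hlt
  have hge : 4 * 4 ^ ka ≤ 4 ^ kb := by
    calc 4 * 4 ^ ka = 4 ^ (ka + 1) := (pow_succ' 4 ka).symm
      _ ≤ 4 ^ kb := Nat.pow_le_pow_right (by norm_num) (by omega)
  have hpos : 0 < (4:ℕ) ^ k0 := pow_pos (by norm_num) k0
  omega

end WPF2

/-- The word problem of `F₂ × F₂`, with respect to any choice
of generators, does not belong to any cone all of whose members are
semilinear. -/
theorem wordProblem_F2xF2_not_in_semilinear_cone
    (𝒞 : LanguageCone) (hsemi : 𝒞.IsSemilinearCone)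
    (α : Type) [Fintype α] (c : GeneratorChoice α (F2 × F2)) :
    ¬ 𝒞.mem α (wordProblem c) := by
  classical
  intro hmem
  open WPF2 in
  obtain ⟨g, hg⟩ := Classical.axiomOfChoice (fun γ : WPF2.Γ => c.surjective (WPF2.val γ))
  set f : FreeMonoid WPF2.Γ →* FreeMonoid α := FreeMonoid.lift g with hfdef
  set μ : FreeMonoid WPF2.Γ →* (F2 × F2) := c.π.comp f with hμdef
  have hval : ∀ γ, μ (FreeMonoid.of γ) = WPF2.val γ := by
    intro γ
    show c.π (f (FreeMonoid.of γ)) = _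
    rw [hfdef, FreeMonoid.lift_eval_of]
    exact hg γ
  have h0 := 𝒞.preimage_mem WPF2.Γ α f (wordProblem c) hmem
  have hreg : (WPF2.M.accepts).IsRegular := ⟨WPF2.Q, inferInstance, WPF2.M, rfl⟩
  have h1 := 𝒞.inter_regular_mem WPF2.Γ _ WPF2.M.accepts h0 hreg
  have h2 := 𝒞.image_mem WPF2.Γ (Fin 1) WPF2.hm _ h1
  have h3 := hsemi (Fin 1) _ h2
  apply WPF2.not_semilinear _ ?hub ?hall h3
  case hub =>
    rintro v ⟨u, ⟨w, ⟨hw1, hw2⟩, rfl⟩, rfl⟩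
    obtain ⟨ch, cc, p, rfl⟩ := WPF2.accepts_sound hw2
    have hμw : μ (FreeMonoid.ofList (WPF2.word ch cc p)) = 1 := hw1
    have hν₁ : WPF2.ν₁ μ (FreeMonoid.ofList (WPF2.word ch cc p)) = 1 := by
      rw [WPF2.ν₁, MonoidHom.comp_apply, MonoidHom.comp_apply, hμw]
      simp
    have hν₂ : WPF2.ν₂ μ (FreeMonoid.ofList (WPF2.word ch cc p)) = 1 := by
      rw [WPF2.ν₂, MonoidHom.comp_apply, MonoidHom.comp_apply, hμw]
      simp
    rw [WPF2.word, WPF2.hom_cons, WPF2.ν₁_z μ hval] at hν₁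
    rw [WPF2.word, WPF2.hom_cons, WPF2.ν₂_z μ hval, one_mul] at hν₂
    have hb1 : ((⟨0, WPF2.CC (2 * (1:ℕ))⟩ : WPF2.HH)
        * WPF2.ν₁ μ (FreeMonoid.ofList (WPF2.body ch cc p))).p = 0 := by
      have : ((2 : ℤ)) = 2 * ((1:ℕ) : ℤ) := by norm_num
      rw [← this, hν₁]
      rfl
    have hb2 : (WPF2.ν₂ μ (FreeMonoid.ofList (WPF2.body ch cc p))).p = 0 := by
      rw [hν₂]; rfl
    have hcc := WPF2.ML μ hval ch 1 cc p hb1 hb2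
    refine ⟨ch.length, ?_⟩
    have hcnt : WPF2.hm (FreeMonoid.ofList (WPF2.word ch cc p))
        = FreeMonoid.ofList (List.replicate cc (0 : Fin 1)) := WPF2.hm_word ch cc p
    have hv : parikh (WPF2.hm (WPF2.word ch cc p)) 0 = cc := by
      rw [show WPF2.hm (WPF2.word ch cc p)
          = FreeMonoid.ofList (List.replicate cc (0 : Fin 1)) from hcnt]
      exact congrFun (WPF2.parikh_rep' cc) 0
    rw [hv]
    omega
  case hall =>
    intro k
    refine ⟨WPF2.hm (FreeMonoid.ofList (WPF2.wit k)),
      ⟨FreeMonoid.ofList (WPF2.wit k), ⟨?_, ?_⟩, rfl⟩, ?_⟩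
    · exact WPF2.wit_eq_one μ hval k
    · exact WPF2.word_accepted _ _ _
    · rw [show WPF2.hm (FreeMonoid.ofList (WPF2.wit k))
          = FreeMonoid.ofList (List.replicate (2 * 4 ^ k) (0 : Fin 1)) from
          WPF2.hm_word (WPF2.chW k) (2 * 4 ^ k) k]
      exact WPF2.parikh_rep' (2 * 4 ^ k)
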